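/- Fix N ≥ 1, m ≥ 1 and real numbers t₀ < T. Let H, h₁,…,h_m : ℝ^N × ℝ^N → ℝ be C², let Γ₀,…,Γ_m be real N × N matrices, and define the vector fields X(q,p) = ( ∇_pH(q,p), −∇_qH(q,p) − Γ₀p ) and Y_i(q,p) = ( ∇_ph_i(q,p), −∇_qh_i(q,p) − Γ_i p ) for i = 1,…,m. Let w : ℝ → ℝ^m be C¹ and let φ : [t₀,T] × (ℝ^N × ℝ^N) → ℝ^N × ℝ^N be C² with φ(t₀, z) = z for all z and ∂_tφ(t,z) = X(φ(t,z)) + Σ_{i=1}^m (wⁱ)'(t) Y_i(φ(t,z)) for all (t,z). Then for all t ∈ [t₀,T] and all z ∈ ℝ^N × ℝ^N: det D_zφ(t,z) = exp( −tr Γ₀ · (t − t₀) − Σ_{i=1}^m tr Γ_i · ( wⁱ(t) − wⁱ(t₀) ) ). (Smooth-noise, pathwise version of Theorem 2.4: the phase-space volume form evolves under the flow of the stochastic forced Hamiltonian system with forcing F = −Γ₀p, f_i = −Γ_i p by the factor b_{t,t₀} = exp(−tr Γ₀ (t−t₀) − Σ_i tr Γ_i (wⁱ(t)−wⁱ(t₀))).)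 -/

import Mathlib

/- STATEMENT 12: Phase-space volume evolution for the flow of a stochastic forced
   Hamiltonian system with forcing F = −Γ₀p, f_i = −Γ_i p
   (smooth-noise, pathwise version of Theorem 2.4). -/

noncomputable section
open scoped BigOperators

abbrev E (N : ℕ) : Type := EuclideanSpace ℝ (Fin N)

/-- Gradient with respect to the first argument. -/
noncomputable def D1 {N : ℕ} (H : E N × E N → ℝ) (x y : E N) : E N :=
  gradient (fun x' => H (x', y)) x

/-- Gradient with respect to the second argument. -/
noncomputable def D2 {N : ℕ} (H : E N × E N → ℝ) (x y : E N) : E N :=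
  gradient (fun y' => H (x, y')) y

open Matrix

variable {N : ℕ}

lemma fderiv_fst_arg (K : E N × E N → ℝ) (hK : Differentiable ℝ K) (x y : E N) :
    fderiv ℝ (fun x' => K (x', y)) x
      = (fderiv ℝ K (x, y)).comp (ContinuousLinearMap.inl ℝ (E N) (E N)) :=
  ((hK (x, y)).hasFDerivAt.comp x (hasFDerivAt_prodMk_left x y)).fderiv

lemma fderiv_snd_arg (K : E N × E N → ℝ) (hK : Differentiable ℝ K) (x y : E N) :
    fderiv ℝ (fun y' => K (x, y')) y
      = (fderiv ℝ K (x, y)).comp (ContinuousLinearMap.inr ℝ (E N) (E N)) :=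
  ((hK (x, y)).hasFDerivAt.comp y (hasFDerivAt_prodMk_right x y)).fderiv

lemma toDual_symm_coord (L : StrongDual ℝ (E N)) (i : Fin N) :
    ((InnerProductSpace.toDual ℝ (E N)).symm L) i = L (EuclideanSpace.single i 1) := by
  have h : (inner ℝ ((InnerProductSpace.toDual ℝ (E N)).symm L) (EuclideanSpace.single i 1) : ℝ)
      = L (EuclideanSpace.single i 1) := InnerProductSpace.toDual_symm_apply
  rw [← h, EuclideanSpace.inner_single_right]
  simp

lemma D1_coord (K : E N × E N → ℝ) (hK : Differentiable ℝ K) (x y : E N) (i : Fin N) :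
    D1 K x y i = fderiv ℝ K (x, y) (EuclideanSpace.single i 1, 0) := by
  rw [D1, gradient, toDual_symm_coord, fderiv_fst_arg K hK]
  simp

lemma D2_coord (K : E N × E N → ℝ) (hK : Differentiable ℝ K) (x y : E N) (i : Fin N) :
    D2 K x y i = fderiv ℝ K (x, y) (0, EuclideanSpace.single i 1) := by
  rw [D2, gradient, toDual_symm_coord, fderiv_snd_arg K hK]
  simp

lemma D1_eq (K : E N × E N → ℝ) (hK : Differentiable ℝ K) (x y : E N) :
    D1 K x y = (InnerProductSpace.toDual ℝ (E N)).symm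
      ((fderiv ℝ K (x, y)).comp (ContinuousLinearMap.inl ℝ (E N) (E N))) := by
  rw [D1, gradient, fderiv_fst_arg K hK]

lemma D2_eq (K : E N × E N → ℝ) (hK : Differentiable ℝ K) (x y : E N) :
    D2 K x y = (InnerProductSpace.toDual ℝ (E N)).symm
      ((fderiv ℝ K (x, y)).comp (ContinuousLinearMap.inr ℝ (E N) (E N))) := by
  rw [D2, gradient, fderiv_snd_arg K hK]

lemma Z_differentiable (K : E N × E N → ℝ) (hK : ContDiff ℝ 2 K) (Γ : E N →L[ℝ] E N) :
    Differentiable ℝ (fun z : E N × E N =>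
      ((D2 K z.1 z.2, -D1 K z.1 z.2 - Γ z.2) : E N × E N)) := by
  have hK1 : Differentiable ℝ K := hK.differentiable (by norm_num)
  have hF : Differentiable ℝ (fderiv ℝ K) :=
    (hK.fderiv_right (m := 1) (by norm_num)).differentiable (by norm_num)
  have h2 : Differentiable ℝ (fun z : E N × E N => D2 K z.1 z.2) := by
    have he : (fun z : E N × E N => D2 K z.1 z.2)
        = fun z => (InnerProductSpace.toDual ℝ (E N)).symm
            ((fderiv ℝ K z).comp (ContinuousLinearMap.inr ℝ (E N) (E N))) := by
      funext z
      rw [D2_eq K hK1]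
    rw [he]
    exact ((LinearIsometryEquiv.contDiff _).differentiable (by norm_num : (1 : WithTop ℕ∞) ≠ 0)).comp
      (hF.clm_comp (differentiable_const _))
  have h1 : Differentiable ℝ (fun z : E N × E N => D1 K z.1 z.2) := by
    have he : (fun z : E N × E N => D1 K z.1 z.2)
        = fun z => (InnerProductSpace.toDual ℝ (E N)).symm
            ((fderiv ℝ K z).comp (ContinuousLinearMap.inl ℝ (E N) (E N))) := by
      funext z
      rw [D1_eq K hK1]
    rw [he]
    exact ((LinearIsometryEquiv.contDiff _).differentiable (by norm_num : (1 : WithTop ℕ∞) ≠ 0)).comp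
      (hF.clm_comp (differentiable_const _))
  have h3 : Differentiable ℝ (fun z : E N × E N => Γ z.2) :=
    Γ.differentiable.comp differentiable_snd
  exact h2.prodMk ((h1.neg).sub h3)

lemma fderiv_clm_eval {G₁ G₂ G₃ : Type*} [NormedAddCommGroup G₁] [NormedSpace ℝ G₁]
    [NormedAddCommGroup G₂] [NormedSpace ℝ G₂] [NormedAddCommGroup G₃] [NormedSpace ℝ G₃]
    {F : G₁ → (G₂ →L[ℝ] G₃)} {z₀ : G₁}
    (hF : DifferentiableAt ℝ F z₀) (v : G₂) (u : G₁) :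
    fderiv ℝ (fun z => F z v) z₀ u = fderiv ℝ F z₀ u v := by
  have h : HasFDerivAt (fun z => F z v)
      ((ContinuousLinearMap.apply ℝ G₃ v).comp (fderiv ℝ F z₀)) z₀ :=
    (ContinuousLinearMap.apply ℝ G₃ v).hasFDerivAt.comp z₀ hF.hasFDerivAt
  rw [h.fderiv]
  rfl

lemma coord_fderiv_fst {Z : E N × E N → E N × E N} {z₀ : E N × E N}
    (hZ : DifferentiableAt ℝ Z z₀) (i : Fin N) (u : E N × E N) :
    (fderiv ℝ Z z₀ u).1 i = fderiv ℝ (fun z => (Z z).1 i) z₀ u := by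
  have h : HasFDerivAt (fun z => (Z z).1 i)
      (((EuclideanSpace.proj i).comp (ContinuousLinearMap.fst ℝ (E N) (E N))).comp
        (fderiv ℝ Z z₀)) z₀ :=
    ((EuclideanSpace.proj i).comp (ContinuousLinearMap.fst ℝ (E N) (E N))).hasFDerivAt.comp z₀
      hZ.hasFDerivAt
  rw [h.fderiv]
  rfl

lemma coord_fderiv_snd {Z : E N × E N → E N × E N} {z₀ : E N × E N}
    (hZ : DifferentiableAt ℝ Z z₀) (i : Fin N) (u : E N × E N) :
    (fderiv ℝ Z z₀ u).2 i = fderiv ℝ (fun z => (Z z).2 i) z₀ u := by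
  have h : HasFDerivAt (fun z => (Z z).2 i)
      (((EuclideanSpace.proj i).comp (ContinuousLinearMap.snd ℝ (E N) (E N))).comp
        (fderiv ℝ Z z₀)) z₀ :=
    ((EuclideanSpace.proj i).comp (ContinuousLinearMap.snd ℝ (E N) (E N))).hasFDerivAt.comp z₀
      hZ.hasFDerivAt
  rw [h.fderiv]
  rfl

lemma basisFun_eq_single (i : Fin N) :
    (PiLp.basisFun 2 ℝ (Fin N)) i = EuclideanSpace.single i 1 := by
  rw [PiLp.basisFun_apply, EuclideanSpace.single]

lemma trace_Gamma (Γ : E N →L[ℝ] E N) :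
    LinearMap.trace ℝ (E N) Γ.toLinearMap
      = ∑ i, Γ (EuclideanSpace.single i 1) i := by
  rw [LinearMap.trace_eq_matrix_trace ℝ (PiLp.basisFun 2 ℝ (Fin N)), Matrix.trace]
  refine Finset.sum_congr rfl fun i _ => ?_
  rw [Matrix.diag, LinearMap.toMatrix_apply, basisFun_eq_single, PiLp.basisFun_repr]
  rfl

lemma Z_trace (K : E N × E N → ℝ) (hK : ContDiff ℝ 2 K) (Γ : E N →L[ℝ] E N)
    (z₀ : E N × E N) :
    LinearMap.trace ℝ (E N × E N)
        (fderiv ℝ (fun z : E N × E N =>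
          ((D2 K z.1 z.2, -D1 K z.1 z.2 - Γ z.2) : E N × E N)) z₀).toLinearMap
      = -(LinearMap.trace ℝ (E N) Γ.toLinearMap) := by
  classical
  have hK1 : Differentiable ℝ K := hK.differentiable (by norm_num)
  have hF : Differentiable ℝ (fderiv ℝ K) :=
    (hK.fderiv_right (m := 1) (by norm_num)).differentiable (by norm_num)
  set Z : E N × E N → E N × E N :=
    fun z => (D2 K z.1 z.2, -D1 K z.1 z.2 - Γ z.2) with hZdef
  have hZ : Differentiable ℝ Z := Z_differentiable K hK Γ
  set bE : Module.Basis (Fin N) ℝ (E N) := PiLp.basisFun 2 ℝ (Fin N) with hbE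
  set b : Module.Basis (Fin N ⊕ Fin N) ℝ (E N × E N) := bE.prod bE with hb
  set S := fderiv ℝ (fderiv ℝ K) z₀ with hS
  have hsym : IsSymmSndFDerivAt ℝ K z₀ :=
    hK.contDiffAt.isSymmSndFDerivAt (by simp)
  -- the two families of scalar coordinate functions
  have hZ1 : ∀ i : Fin N, (fun z => (Z z).1 i)
      = fun z => fderiv ℝ K z (0, EuclideanSpace.single i 1) := by
    intro i; funext z
    show D2 K z.1 z.2 i = _
    rw [D2_coord K hK1]
  have hZ2 : ∀ i : Fin N, (fun z => (Z z).2 i)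
      = fun z => -(fderiv ℝ K z (EuclideanSpace.single i 1, 0)) - (Γ z.2) i := by
    intro i; funext z
    show (-D1 K z.1 z.2 - Γ z.2) i = _
    have : (-D1 K z.1 z.2 - Γ z.2) i = -(D1 K z.1 z.2 i) - (Γ z.2) i := rfl
    rw [this, D1_coord K hK1]
  -- derivative of the evaluation functions
  have hev : ∀ v : E N × E N, Differentiable ℝ (fun z => fderiv ℝ K z v) := by
    intro v z
    exact ((ContinuousLinearMap.apply ℝ ℝ v).hasFDerivAt.comp z
      (hF z).hasFDerivAt).differentiableAt
  have hlinH : ∀ i : Fin N, HasFDerivAt (fun z : E N × E N => (Γ z.2) i)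
      ((EuclideanSpace.proj i).comp (Γ.comp (ContinuousLinearMap.snd ℝ (E N) (E N)))) z₀ :=
    fun i => ((EuclideanSpace.proj i).comp
      (Γ.comp (ContinuousLinearMap.snd ℝ (E N) (E N)))).hasFDerivAt
  -- diagonal entries
  have diag1 : ∀ i : Fin N,
      b.repr (fderiv ℝ Z z₀ (b (Sum.inl i))) (Sum.inl i)
        = S (EuclideanSpace.single i 1, 0) (0, EuclideanSpace.single i 1) := by
    intro i
    have hb1 : b (Sum.inl i) = ((EuclideanSpace.single i 1 : E N), (0 : E N)) := by
      apply Prod.ext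
      · rw [hb, Module.Basis.prod_apply_inl_fst, hbE, basisFun_eq_single]
      · rw [hb, Module.Basis.prod_apply_inl_snd]
    rw [hb, Module.Basis.prod_repr_inl, hbE, PiLp.basisFun_repr, ← hb]
    rw [coord_fderiv_fst (hZ z₀) i, hZ1 i, hb1, fderiv_clm_eval (hF z₀), ← hS]
  have diag2 : ∀ i : Fin N,
      b.repr (fderiv ℝ Z z₀ (b (Sum.inr i))) (Sum.inr i)
        = -(S ((0 : E N), EuclideanSpace.single i 1) (EuclideanSpace.single i 1, (0 : E N)))
            - (Γ (EuclideanSpace.single i 1)) i := by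
    intro i
    have hb2 : b (Sum.inr i) = ((0 : E N), (EuclideanSpace.single i 1 : E N)) := by
      apply Prod.ext
      · rw [hb, Module.Basis.prod_apply_inr_fst]
      · rw [hb, Module.Basis.prod_apply_inr_snd, hbE, basisFun_eq_single]
    rw [hb, Module.Basis.prod_repr_inr, hbE, PiLp.basisFun_repr, ← hb]
    rw [coord_fderiv_snd (hZ z₀) i, hZ2 i,
      fderiv_fun_sub (f := fun z => -(fderiv ℝ K z) (EuclideanSpace.single i 1, 0))
        ((hev _ z₀).neg) (hlinH i).differentiableAt,
      ContinuousLinearMap.sub_apply, fderiv_fun_neg, ContinuousLinearMap.neg_apply,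
      fderiv_clm_eval (hF z₀), (hlinH i).fderiv, hb2, ← hS]
    rfl
  rw [LinearMap.trace_eq_matrix_trace ℝ b, Matrix.trace, Fintype.sum_sum_type]
  have h1 : ∑ i, (LinearMap.toMatrix b b (fderiv ℝ Z z₀).toLinearMap).diag (Sum.inl i)
      = ∑ i : Fin N, S ((0 : E N), EuclideanSpace.single i 1)
          (EuclideanSpace.single i 1, (0 : E N)) := by
    refine Finset.sum_congr rfl fun i _ => ?_
    rw [Matrix.diag, LinearMap.toMatrix_apply]
    rw [show ((fderiv ℝ Z z₀).toLinearMap (b (Sum.inl i)))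
        = fderiv ℝ Z z₀ (b (Sum.inl i)) from rfl]
    rw [diag1 i, hS]
    exact hsym _ _
  have h2 : ∑ i, (LinearMap.toMatrix b b (fderiv ℝ Z z₀).toLinearMap).diag (Sum.inr i)
      = ∑ i : Fin N, (-(S ((0 : E N), EuclideanSpace.single i 1)
            (EuclideanSpace.single i 1, (0 : E N)))
          - (Γ (EuclideanSpace.single i 1)) i) := by
    refine Finset.sum_congr rfl fun i _ => ?_
    rw [Matrix.diag, LinearMap.toMatrix_apply]
    rw [show ((fderiv ℝ Z z₀).toLinearMap (b (Sum.inr i)))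
        = fderiv ℝ Z z₀ (b (Sum.inr i)) from rfl]
    exact diag2 i
  rw [h1, h2, ← Finset.sum_add_distrib, trace_Gamma]
  rw [← Finset.sum_neg_distrib]
  refine Finset.sum_congr rfl fun i _ => ?_
  ring


lemma sum_det_updateColumn_eq {n : Type*} [Fintype n] [DecidableEq n]
    (A B : Matrix n n ℝ) :
    ∑ j, (A.updateCol j (fun r => B r j)).det = (A.adjugate * B).trace := by
  simp only [← Matrix.cramer_apply, Matrix.cramer_eq_adjugate_mulVec]
  simp [Matrix.trace, Matrix.diag, Matrix.mul_apply, Matrix.mulVec, dotProduct]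

lemma det_updateColumn_eq_sum_perm {n : Type*} [Fintype n] [DecidableEq n]
    (A : Matrix n n ℝ) (j : n) (c : n → ℝ) :
    (A.updateCol j c).det
      = ∑ σ : Equiv.Perm n, ((Equiv.Perm.sign σ : ℤ) : ℝ)
          * (c (σ j) * ∏ i ∈ Finset.univ.erase j, A (σ i) i) := by
  rw [Matrix.det_apply']
  refine Finset.sum_congr rfl fun σ _ => ?_
  congr 1
  rw [← Finset.mul_prod_erase _ _ (Finset.mem_univ j)]
  congr 1
  · simp [Matrix.updateCol_apply]
  · refine Finset.prod_congr rfl fun i hi => ?_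
    simp [Matrix.updateCol_apply, Finset.ne_of_mem_erase hi]

lemma hasDerivAt_det_aux {n : Type*} [Fintype n] [DecidableEq n]
    (M : ℝ → Matrix n n ℝ) (M' : Matrix n n ℝ) (t : ℝ)
    (h : ∀ i j, HasDerivAt (fun s => M s i j) (M' i j) t) :
    HasDerivAt (fun s => (M s).det) ((adjugate (M t) * M').trace) t := by
  rw [← sum_det_updateColumn_eq]
  have key : HasDerivAt (fun s => (M s).det)
      (∑ σ : Equiv.Perm n, ((Equiv.Perm.sign σ : ℤ) : ℝ) *
        ∑ j, (∏ i ∈ Finset.univ.erase j, M t (σ i) i) • M' (σ j) j) t := by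
    simp only [Matrix.det_apply']
    exact HasDerivAt.fun_sum fun σ _ =>
      ((HasDerivAt.fun_finsetProd (fun i _ => h (σ i) i))).const_mul _
  convert key using 1
  simp only [det_updateColumn_eq_sum_perm, smul_eq_mul, Finset.mul_sum]
  rw [Finset.sum_comm]
  refine Finset.sum_congr rfl fun σ _ => Finset.sum_congr rfl fun j _ => by ring

lemma trace_adj_mul {n : Type*} [Fintype n] [DecidableEq n] (A C : Matrix n n ℝ) :
    (adjugate A * (C * A)).trace = C.trace * A.det := by
  rw [← Matrix.mul_assoc, Matrix.trace_mul_comm, ← Matrix.mul_assoc, Matrix.mul_adjugate,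
    Matrix.smul_mul, one_mul, Matrix.trace_smul, smul_eq_mul, mul_comm]

theorem phase_space_volume_evolution_pathwise
    {N m : ℕ} (hN : 1 ≤ N) (hm : 1 ≤ m)
    {t₀ T : ℝ} (ht : t₀ < T)
    (H : E N × E N → ℝ) (h : Fin m → E N × E N → ℝ)
    (hH : ContDiff ℝ 2 H) (hh : ∀ i, ContDiff ℝ 2 (h i))
    (Γ0 : E N →L[ℝ] E N) (Γ : Fin m → E N →L[ℝ] E N)
    -- the drift and noise vector fields:
    (X : E N × E N → E N × E N)
    (hX : ∀ z : E N × E N, X z = (D2 H z.1 z.2, -D1 H z.1 z.2 - Γ0 z.2))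
    (Y : Fin m → E N × E N → E N × E N)
    (hY : ∀ i, ∀ z : E N × E N,
      Y i z = (D2 (h i) z.1 z.2, -D1 (h i) z.1 z.2 - Γ i z.2))
    -- the smooth noise path:
    (w : Fin m → ℝ → ℝ) (hw : ∀ i, ContDiff ℝ 1 (w i))
    -- the flow map:
    (φ : ℝ → E N × E N → E N × E N)
    (hφC2 : ContDiff ℝ 2 (fun tz : ℝ × (E N × E N) => φ tz.1 tz.2))
    (hφ0 : ∀ z : E N × E N, φ t₀ z = z)
    (hφ : ∀ z : E N × E N, ∀ t ∈ Set.Icc t₀ T,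
        HasDerivAt (fun t' => φ t' z)
          (X (φ t z) + ∑ i, deriv (w i) t • Y i (φ t z)) t) :
    ∀ t ∈ Set.Icc t₀ T, ∀ z : E N × E N,
      LinearMap.det (fderiv ℝ (φ t) z).toLinearMap
        = Real.exp (-(LinearMap.trace ℝ (E N) Γ0.toLinearMap) * (t - t₀)
            - ∑ i, LinearMap.trace ℝ (E N) (Γ i).toLinearMap * (w i t - w i t₀)) := by
  classical
  intro t htmem z
  set trΓ0 : ℝ := LinearMap.trace ℝ (E N) Γ0.toLinearMap with htrΓ0
  set trΓ : Fin m → ℝ := fun i => LinearMap.trace ℝ (E N) (Γ i).toLinearMap with htrΓ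
  have hXfun : X = fun z : E N × E N =>
      ((D2 H z.1 z.2, -D1 H z.1 z.2 - Γ0 z.2) : E N × E N) := funext hX
  have hYfun : ∀ i, Y i = fun z : E N × E N =>
      ((D2 (h i) z.1 z.2, -D1 (h i) z.1 z.2 - Γ i z.2) : E N × E N) :=
    fun i => funext (hY i)
  have hXd : Differentiable ℝ X := by rw [hXfun]; exact Z_differentiable H hH Γ0
  have hYd : ∀ i, Differentiable ℝ (Y i) := fun i => by
    rw [hYfun i]; exact Z_differentiable (h i) (hh i) (Γ i)
  have hXtr : ∀ x₀, LinearMap.trace ℝ (E N × E N) (fderiv ℝ X x₀).toLinearMap = -trΓ0 := by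
    intro x₀; rw [hXfun]; exact Z_trace H hH Γ0 x₀
  have hYtr : ∀ i x₀,
      LinearMap.trace ℝ (E N × E N) (fderiv ℝ (Y i) x₀).toLinearMap = -trΓ i := by
    intro i x₀; rw [hYfun i]; exact Z_trace (h i) (hh i) (Γ i) x₀
  set G : ℝ → (E N × E N) → E N × E N :=
    fun s x => X x + ∑ i, deriv (w i) s • Y i x with hG
  have hGd : ∀ s, Differentiable ℝ (G s) := fun s =>
    hXd.add (Differentiable.fun_sum fun i _ => (hYd i).const_smul (deriv (w i) s))
  set Φ : ℝ × (E N × E N) → E N × E N := fun p => φ p.1 p.2 with hΦ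
  have hΦd : Differentiable ℝ Φ := hφC2.differentiable (by norm_num)
  set Ψ : ℝ × (E N × E N) → (ℝ × (E N × E N)) →L[ℝ] (E N × E N) := fderiv ℝ Φ with hΨ
  have hΨd : Differentiable ℝ Ψ := (hφC2.fderiv_right (m := 1) (by norm_num)).differentiable (by norm_num)
  have hA : ∀ (s : ℝ) (z' : E N × E N),
      HasFDerivAt (φ s)
        ((Ψ (s, z')).comp (ContinuousLinearMap.inr ℝ ℝ (E N × E N))) z' := by
    intro s z'
    exact (hΦd (s, z')).hasFDerivAt.comp z' (hasFDerivAt_prodMk_right s z')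
  have hφtd : ∀ s, Differentiable ℝ (φ s) := fun s z' => (hA s z').differentiableAt
  have hTd : ∀ (s : ℝ) (z' : E N × E N),
      HasDerivAt (fun s' => Ψ (s', z')) (fderiv ℝ Ψ (s, z') (1, 0)) s := by
    intro s z'
    exact (hΨd (s, z')).hasFDerivAt.comp_hasDerivAt s
      ((hasDerivAt_id s).prodMk (hasDerivAt_const s z'))
  have hEq : ∀ s ∈ Set.Icc t₀ T, ∀ z' : E N × E N, Ψ (s, z') (1, 0) = G s (φ s z') := by
    intro s hs z'
    have h1 : HasDerivAt (fun s' => φ s' z') (Ψ (s, z') (1, 0)) s := by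
      exact (hΦd (s, z')).hasFDerivAt.comp_hasDerivAt s
        ((hasDerivAt_id s).prodMk (hasDerivAt_const s z'))
    exact h1.unique (hφ z' s hs)
  set bE : Module.Basis (Fin N) ℝ (E N) := PiLp.basisFun 2 ℝ (Fin N) with hbE
  set b : Module.Basis (Fin N ⊕ Fin N) ℝ (E N × E N) := bE.prod bE with hb
  set M : ℝ → Matrix (Fin N ⊕ Fin N) (Fin N ⊕ Fin N) ℝ :=
    fun s => LinearMap.toMatrix b b (fderiv ℝ (φ s) z).toLinearMap with hM
  set C : ℝ → Matrix (Fin N ⊕ Fin N) (Fin N ⊕ Fin N) ℝ :=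
    fun s => LinearMap.toMatrix b b (fderiv ℝ (G s) (φ s z)).toLinearMap with hC
  have coordCLM : ∀ r : Fin N ⊕ Fin N,
      ∃ ℓ : (E N × E N) →L[ℝ] ℝ, ∀ v, ℓ v = b.repr v r := by
    intro r
    cases r with
    | inl i =>
      refine ⟨(EuclideanSpace.proj i).comp (ContinuousLinearMap.fst ℝ (E N) (E N)),
        fun v => ?_⟩
      rw [hb, Module.Basis.prod_repr_inl, hbE, PiLp.basisFun_repr]; rfl
    | inr i =>
      refine ⟨(EuclideanSpace.proj i).comp (ContinuousLinearMap.snd ℝ (E N) (E N)),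
        fun v => ?_⟩
      rw [hb, Module.Basis.prod_repr_inr, hbE, PiLp.basisFun_repr]; rfl
  have key : ∀ s ∈ Set.Icc t₀ T, ∀ v : E N × E N,
      fderiv ℝ Ψ (s, z) (1, 0) (0, v)
        = fderiv ℝ (G s) (φ s z) (fderiv ℝ (φ s) z v) := by
    intro s hs v
    have hsym : IsSymmSndFDerivAt ℝ Φ (s, z) :=
      hφC2.contDiffAt.isSymmSndFDerivAt (by simp)
    have e1 : fderiv ℝ Ψ (s, z) (1, 0) (0, v) = fderiv ℝ Ψ (s, z) (0, v) (1, 0) :=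
      hsym _ _
    have hΘ : HasFDerivAt (fun z' => Ψ (s, z'))
        ((fderiv ℝ Ψ (s, z)).comp (ContinuousLinearMap.inr ℝ ℝ (E N × E N))) z :=
      (hΨd (s, z)).hasFDerivAt.comp z (hasFDerivAt_prodMk_right s z)
    have e2 : fderiv ℝ (fun z' => Ψ (s, z') (1, 0)) z v
        = fderiv ℝ Ψ (s, z) (0, v) (1, 0) := by
      rw [fderiv_clm_eval hΘ.differentiableAt (1, 0) v, hΘ.fderiv]; rfl
    have e3 : (fun z' => Ψ (s, z') (1, 0)) = fun z' => G s (φ s z') := by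
      funext z'; exact hEq s hs z'
    have e4 : fderiv ℝ (fun z' => G s (φ s z')) z v
        = fderiv ℝ (G s) (φ s z) (fderiv ℝ (φ s) z v) := by
      rw [show (fun z' => G s (φ s z')) = (G s) ∘ (φ s) from rfl,
        fderiv_comp z ((hGd s) _) ((hφtd s) z)]
      rfl
    rw [e1, ← e2, e3, e4]
  have hMder : ∀ s ∈ Set.Icc t₀ T, ∀ r c' : Fin N ⊕ Fin N,
      HasDerivAt (fun s' => M s' r c') ((C s * M s) r c') s := by
    intro s hs r c'
    obtain ⟨ℓ, hℓ⟩ := coordCLM r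
    have hfun : (fun s' => M s' r c') = fun s' => ℓ (Ψ (s', z) (0, b c')) := by
      funext s'
      simp only [hM]
      rw [LinearMap.toMatrix_apply, ← hℓ, (hA s' z).fderiv]
      rfl
    rw [hfun]
    have step2 : HasDerivAt (fun s' => ℓ (Ψ (s', z) (0, b c')))
        (ℓ (fderiv ℝ Ψ (s, z) (1, 0) (0, b c'))) s := by
      exact (ℓ.comp
        (ContinuousLinearMap.apply ℝ (E N × E N) ((0 : ℝ), b c'))).hasFDerivAt.comp_hasDerivAt
          s (hTd s z)
    convert step2 using 1
    rw [key s hs (b c'), hℓ]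
    simp only [hC, hM]
    rw [← LinearMap.toMatrix_comp b b b, LinearMap.toMatrix_apply]
    rfl
  have hdet : ∀ s ∈ Set.Icc t₀ T,
      HasDerivAt (fun s' => (M s').det) ((C s).trace * (M s).det) s := by
    intro s hs
    have := hasDerivAt_det_aux M (C s * M s) s (fun r c' => hMder s hs r c')
    rwa [trace_adj_mul] at this
  have htrC : ∀ s : ℝ, (C s).trace = -trΓ0 - ∑ i, trΓ i * deriv (w i) s := by
    intro s
    have h1 : (C s).trace
        = LinearMap.trace ℝ (E N × E N) (fderiv ℝ (G s) (φ s z)).toLinearMap := by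
      simp only [hC]
      rw [LinearMap.trace_eq_matrix_trace ℝ b]
    have h2 : fderiv ℝ (G s) (φ s z)
        = fderiv ℝ X (φ s z) + ∑ i, deriv (w i) s • fderiv ℝ (Y i) (φ s z) := by
      simp only [hG]
      rw [fderiv_fun_add (g := fun x => ∑ i, deriv (w i) s • Y i x) (hXd _)
        (DifferentiableAt.fun_sum fun i _ => ((hYd i) _).const_smul (deriv (w i) s)),
        fderiv_fun_sum (A := fun i x => deriv (w i) s • Y i x)
          fun i _ => ((hYd i) _).const_smul (deriv (w i) s)]
      congr 1
      exact Finset.sum_congr rfl fun i _ => fderiv_fun_const_smul ((hYd i) _) _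
    have h3 : ((fderiv ℝ X (φ s z)
          + ∑ i, deriv (w i) s • fderiv ℝ (Y i) (φ s z)) :
            (E N × E N) →L[ℝ] (E N × E N)).toLinearMap
        = (fderiv ℝ X (φ s z)).toLinearMap
          + ∑ i, deriv (w i) s • (fderiv ℝ (Y i) (φ s z)).toLinearMap := by
      rw [ContinuousLinearMap.coe_add, ContinuousLinearMap.coe_sum]
      simp only [ContinuousLinearMap.coe_smul]
    rw [h1, h2, h3, map_add, map_sum, hXtr]
    have h4 : ∀ i ∈ Finset.univ,
        LinearMap.trace ℝ (E N × E N)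
            (deriv (w i) s • (fderiv ℝ (Y i) (φ s z)).toLinearMap)
          = -(trΓ i * deriv (w i) s) := by
      intro i _
      rw [LinearMap.map_smul, hYtr i, smul_eq_mul]
      ring
    rw [Finset.sum_congr rfl h4, Finset.sum_neg_distrib]
    ring
  set Ew : ℝ → ℝ := fun s => trΓ0 * (s - t₀) + ∑ i, trΓ i * (w i s - w i t₀) with hEw
  have hEwd : ∀ s : ℝ, HasDerivAt Ew (trΓ0 + ∑ i, trΓ i * deriv (w i) s) s := by
    intro s
    have h1 : HasDerivAt (fun s' => trΓ0 * (s' - t₀)) trΓ0 s := by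
      simpa using ((hasDerivAt_id s).sub_const t₀).const_mul trΓ0
    have h2 : ∀ i : Fin m, HasDerivAt (fun s' => trΓ i * (w i s' - w i t₀))
        (trΓ i * deriv (w i) s) s := by
      intro i
      have hwi : HasDerivAt (w i) (deriv (w i) s) s :=
        (((hw i).differentiable (by norm_num)) s).hasDerivAt
      exact (hwi.sub_const _).const_mul _
    exact h1.add (HasDerivAt.fun_sum fun i _ => h2 i)
  have hud : ∀ s ∈ Set.Icc t₀ T,
      HasDerivAt (fun s' => Real.exp (Ew s') * (M s').det) 0 s := by
    intro s hs
    have hexp : HasDerivAt (fun s' => Real.exp (Ew s'))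
        (Real.exp (Ew s) * (trΓ0 + ∑ i, trΓ i * deriv (w i) s)) s := (hEwd s).exp
    have hmul : HasDerivAt (fun s' => Real.exp (Ew s') * (M s').det) _ s := hexp.mul (hdet s hs)
    convert hmul using 1
    rw [htrC s]
    ring
  have hcont : ContinuousOn (fun s' => Real.exp (Ew s') * (M s').det) (Set.Icc t₀ T) :=
    fun s hs => ((hud s hs).continuousAt).continuousWithinAt
  have hconst := constant_of_has_deriv_right_zero hcont
    (fun s hs => (hud s (Set.mem_Icc_of_Ico hs)).hasDerivWithinAt) t htmem
  have hφt0 : φ t₀ = id := funext fun z' => hφ0 z'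
  have hM0 : M t₀ = 1 := by
    simp only [hM, hφt0]
    rw [fderiv_id, ContinuousLinearMap.coe_id, LinearMap.toMatrix_id]
  have hEw0 : Ew t₀ = 0 := by
    simp [hEw]
  have hgt : Real.exp (Ew t) * (M t).det = 1 := by
    rw [hconst, hM0, hEw0]
    simp
  have hdetM : LinearMap.det (fderiv ℝ (φ t) z).toLinearMap = (M t).det := by
    simp only [hM]
    rw [LinearMap.det_toMatrix]
  rw [hdetM]
  have hfin : (M t).det = Real.exp (-(Ew t)) := by
    rw [Real.exp_neg]
    field_simp
    linear_combination hgt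
  rw [hfin]
  congr 1
  simp only [hEw]
  ring
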